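/- arXiv:2006.11973 — 2 statements merged into one kernel-verified Lean document; each statement's English description precedes it below -/
import Mathlib

section
/- Discrete Hodge theorem: for a chain complex of finite-dimensional real inner product spaces with differential d and adjoint d*, and Hodge Laplacian H = d d* + d* d, the kernel of H restricted to degree k is isomorphic to the k-th homology of the complex; in particular dim ker(H_k) = dim H_k(C). -/
open scoped RealInnerProductSpace

/-- Discrete Hodge theorem: for a (cochain) complex of finite-dimensional real inner product
spaces with differential `d`, adjoint `δ = d*`, and Hodge Laplacian `H = d d* + d* d`, the
kernel of `H` in a given degree is isomorphic to the homology of the complex in that degree;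
in particular they have the same dimension. -/
theorem discrete_hodge_theorem
    (V : ℤ → Type) [∀ k, NormedAddCommGroup (V k)] [∀ k, InnerProductSpace ℝ (V k)]
    [∀ k, FiniteDimensional ℝ (V k)]
    (d : ∀ k : ℤ, V k →ₗ[ℝ] V (k + 1))
    (δ : ∀ k : ℤ, V (k + 1) →ₗ[ℝ] V k)
    (hdd : ∀ (k : ℤ) (x : V k), d (k + 1) (d k x) = 0)
    (hadj : ∀ (k : ℤ) (x : V k) (y : V (k + 1)), ⟪d k x, y⟫ = ⟪x, δ k y⟫)
    (k : ℤ) :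
    Nonempty
      (LinearMap.ker ((d k).comp (δ k) + (δ (k + 1)).comp (d (k + 1))) ≃ₗ[ℝ]
        (LinearMap.ker (d (k + 1)) ⧸
          (LinearMap.range (d k)).comap (LinearMap.ker (d (k + 1))).subtype)) ∧
    Module.finrank ℝ
        (LinearMap.ker ((d k).comp (δ k) + (δ (k + 1)).comp (d (k + 1)))) =
      Module.finrank ℝ
        (LinearMap.ker (d (k + 1)) ⧸
          (LinearMap.range (d k)).comap (LinearMap.ker (d (k + 1))).subtype) := by
  classical
  set Hop : V (k+1) →ₗ[ℝ] V (k+1) := (d k).comp (δ k) + (δ (k + 1)).comp (d (k + 1)) with hHop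
  set Z : Submodule ℝ (V (k+1)) := LinearMap.ker (d (k + 1)) with hZ
  set B : Submodule ℝ (V (k+1)) := LinearMap.range (d k) with hB
  set B' : Submodule ℝ Z := B.comap Z.subtype with hB'
  -- characterization of the kernel of the Laplacian
  have hker : ∀ x : V (k+1), Hop x = 0 ↔ (d (k+1) x = 0 ∧ δ k x = 0) := by
    intro x
    constructor
    · intro hx
      have h1 : ⟪Hop x, x⟫ = ⟪δ k x, δ k x⟫ + ⟪d (k+1) x, d (k+1) x⟫ := by
        have e1 : ⟪d k (δ k x), x⟫ = ⟪δ k x, δ k x⟫ := hadj k (δ k x) x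
        have e2 : ⟪δ (k+1) (d (k+1) x), x⟫ = ⟪d (k+1) x, d (k+1) x⟫ := by
          rw [real_inner_comm]; exact (hadj (k+1) x (d (k+1) x)).symm
        simp only [hHop, LinearMap.add_apply, LinearMap.comp_apply, inner_add_left]
        rw [e1, e2]
      rw [hx, inner_zero_left] at h1
      have hδ : ⟪δ k x, δ k x⟫ = 0 := by
        have h2 := real_inner_self_nonneg (x := δ k x)
        have h3 := real_inner_self_nonneg (x := d (k+1) x)
        linarith
      have hd : ⟪d (k+1) x, d (k+1) x⟫ = 0 := by
        have h2 := real_inner_self_nonneg (x := δ k x)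
        linarith
      exact ⟨inner_self_eq_zero.mp hd, inner_self_eq_zero.mp hδ⟩
    · rintro ⟨h1, h2⟩
      simp [hHop, LinearMap.add_apply, LinearMap.comp_apply, h1, h2]
  -- ker Hop ≤ Z
  have hle : LinearMap.ker Hop ≤ Z := fun x hx => ((hker x).mp hx).1
  -- the map to homology
  let f : LinearMap.ker Hop →ₗ[ℝ] Z ⧸ B' := B'.mkQ.comp (Submodule.inclusion hle)
  have hinj : Function.Injective f := by
    rw [← LinearMap.ker_eq_bot]
    rw [Submodule.eq_bot_iff]
    rintro ⟨x, hx⟩ hfx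
    have hmem : Submodule.inclusion hle ⟨x, hx⟩ ∈ B' := by
      simpa [f, Submodule.Quotient.mk_eq_zero] using hfx
    obtain ⟨a, ha⟩ : x ∈ B := hmem
    have hδx : δ k x = 0 := ((hker x).mp hx).2
    have h4 := hadj k a x
    rw [hδx, inner_zero_right, ha] at h4
    have hx0 : x = 0 := inner_self_eq_zero.mp h4
    exact Subtype.ext hx0
  have hsurj : Function.Surjective f := by
    rintro q
    obtain ⟨⟨z, hz⟩, rfl⟩ := B'.mkQ_surjective q
    -- orthogonal projection of z onto B
    have : CompleteSpace B := FiniteDimensional.complete ℝ B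
    set b : V (k+1) := (B.orthogonalProjectionOnto z : V (k+1)) with hb
    have hbB : b ∈ B := (B.orthogonalProjectionOnto z).2
    set h : V (k+1) := z - b with hh
    have hhortho : h ∈ Bᗮ := B.sub_starProjection_mem_orthogonal z
    have hbZ : b ∈ Z := by
      obtain ⟨a, ha⟩ := hbB
      simp [hZ, LinearMap.mem_ker, ← ha, hdd k a]
    have hhZ : d (k+1) h = 0 := by
      have hz' : d (k+1) z = 0 := hz
      have hb' : d (k+1) b = 0 := hbZ
      simp [hh, map_sub, hz', hb']
    have hhδ : δ k h = 0 := by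
      have h0 : ⟪d k (δ k h), h⟫ = 0 :=
        (Submodule.mem_orthogonal B h).mp hhortho (d k (δ k h)) ⟨δ k h, rfl⟩
      have h5 : ⟪δ k h, δ k h⟫ = 0 := by rw [← hadj k (δ k h) h]; exact h0
      exact inner_self_eq_zero.mp h5
    have hhker : h ∈ LinearMap.ker Hop := (hker h).mpr ⟨hhZ, hhδ⟩
    refine ⟨⟨h, hhker⟩, ?_⟩
    simp only [f, LinearMap.comp_apply, Submodule.mkQ_apply]
    rw [Submodule.Quotient.eq]
    show (⟨h, hle hhker⟩ : Z) - ⟨z, hz⟩ ∈ B'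
    simp only [hB', Submodule.mem_comap, Submodule.subtype_apply,
      AddSubgroupClass.coe_sub]
    have heq : h - z = -b := by rw [hh]; abel
    rw [heq]
    exact B.neg_mem hbB
  let e : LinearMap.ker Hop ≃ₗ[ℝ] Z ⧸ B' := LinearEquiv.ofBijective f ⟨hinj, hsurj⟩
  exact ⟨⟨e⟩, e.finrank_eq⟩
end

section
/- Lefschetz number of an automorphism: let T be an automorphism of a chain complex of finite-dimensional vector spaces (a degree-preserving chain map with an inverse chain map). Then the alternating sum of the traces of T on the chain groups equals the alternating sum of the traces of the induced maps on homology: Σ_k (−1)^k tr(T_k on C_k) = Σ_k (−1)^k tr(T_* on H_k). -/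
open CategoryTheory

namespace HopfTraceAux

variable {K : Type} [Field K]

section Generic

variable {M N : Type*} [AddCommGroup M] [Module K M] [AddCommGroup N] [Module K N]

lemma trace_eq_of_comm (e : M ≃ₗ[K] N) (f : M →ₗ[K] M) (g : N →ₗ[K] N)
    (h : ∀ x, e (f x) = g (e x)) : LinearMap.trace K M f = LinearMap.trace K N g := by
  rw [← LinearMap.trace_conj' f e]
  congr 1
  ext x
  rw [LinearEquiv.conj_apply, LinearMap.comp_apply, LinearMap.comp_apply]
  erw [h (e.symm x)]
  rw [LinearEquiv.apply_symm_apply]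

lemma trace_subsingleton [Subsingleton M] (f : M →ₗ[K] M) : LinearMap.trace K M f = 0 := by
  rw [Subsingleton.elim f 0, map_zero]

lemma trace_split [FiniteDimensional K M]
    (f : M →ₗ[K] M) (p : Submodule K M) (hf : ∀ x ∈ p, f x ∈ p) :
    LinearMap.trace K M f =
      LinearMap.trace K p (f.restrict hf) +
        LinearMap.trace K (M ⧸ p) (p.mapQ p f (fun x hx => hf x hx)) := by
  open LinearMap in
  obtain ⟨q, hq⟩ := p.exists_isCompl
  set πp := p.projectionOnto q hq with hπp
  set πq := q.projectionOnto p hq.symm with hπq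
  have hid : f ∘ₗ (p.subtype ∘ₗ πp) + f ∘ₗ (q.subtype ∘ₗ πq) = f := by
    ext x
    show f (πp x : M) + f (πq x : M) = f x
    rw [← map_add]
    exact congrArg f (Submodule.projection_add_projection_eq_self hq x)
  have h1 : trace K M (f ∘ₗ (p.subtype ∘ₗ πp)) = trace K p (f.restrict hf) := by
    rw [← LinearMap.comp_assoc, trace_comp_comm']
    congr 1
    ext x
    have : f.restrict hf x = ⟨f x, hf x x.2⟩ := rfl
    simp [this, Submodule.projectionOnto_apply_left hq ⟨f x, hf x x.2⟩]
    exact congrArg Subtype.val (Submodule.projectionOnto_apply_left hq ⟨f x, hf x x.2⟩)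
  have h2 : trace K M (f ∘ₗ (q.subtype ∘ₗ πq)) =
      trace K (M ⧸ p) (p.mapQ p f (fun x hx => hf x hx)) := by
    rw [← LinearMap.comp_assoc, trace_comp_comm']
    rw [← LinearMap.trace_conj' (p.mapQ p f (fun x hx => hf x hx))
        (Submodule.quotientEquivOfIsCompl p q hq)]
    congr 1
  calc LinearMap.trace K M f
      = trace K M (f ∘ₗ (p.subtype ∘ₗ πp) + f ∘ₗ (q.subtype ∘ₗ πq)) := by rw [hid]
    _ = _ := by rw [map_add, h1, h2]

lemma trace_eq_of_iso {M N : ModuleCat K} (e : M ≅ N) (f : M ⟶ M) (g : N ⟶ N)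
    (h : f ≫ e.hom = e.hom ≫ g) :
    LinearMap.trace K M f.hom = LinearMap.trace K N g.hom := by
  refine trace_eq_of_comm e.toLinearEquiv f.hom g.hom (fun x => ?_)
  have h' := congrArg (fun h => ModuleCat.Hom.hom h x) h
  show e.hom.hom (f.hom x) = g.hom (e.hom.hom x)
  exact h'

end Generic

section SC

variable (S : ShortComplex (ModuleCat K)) (φ : S ⟶ S)

lemma tau2_ker_mem : ∀ x ∈ LinearMap.ker S.g.hom, φ.τ₂ x ∈ LinearMap.ker S.g.hom := by
  intro x hx
  simp only [LinearMap.mem_ker] at hx ⊢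
  calc S.g (φ.τ₂ x) = φ.τ₃ (S.g x) := congrArg (fun h => ModuleCat.Hom.hom h x) φ.comm₂₃
    _ = 0 := by rw [hx, map_zero]

/-- The endomorphism induced by `φ` on the kernel of `S.g`. -/
noncomputable def tauZ : LinearMap.ker S.g.hom →ₗ[K] LinearMap.ker S.g.hom :=
  φ.τ₂.hom.restrict (tau2_ker_mem S φ)

lemma tauZ_range_le : ∀ x ∈ LinearMap.range S.moduleCatToCycles,
    tauZ S φ x ∈ LinearMap.range S.moduleCatToCycles := by
  rintro x ⟨y, rfl⟩
  refine ⟨φ.τ₁ y, ?_⟩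
  apply Subtype.ext
  show S.f (φ.τ₁ y) = φ.τ₂ (S.f y)
  exact congrArg (fun h => ModuleCat.Hom.hom h y) φ.comm₁₂

/-- The endomorphism induced by `φ` on the concrete homology of `S`. -/
noncomputable def tauH : (LinearMap.ker S.g.hom ⧸ LinearMap.range S.moduleCatToCycles) →ₗ[K] (LinearMap.ker S.g.hom ⧸ LinearMap.range S.moduleCatToCycles) :=
  Submodule.mapQ _ _ (tauZ S φ) (fun x hx => tauZ_range_le S φ x hx)

lemma cyc_square :
    ShortComplex.cyclesMap φ ≫ S.moduleCatCyclesIso.hom =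
      S.moduleCatCyclesIso.hom ≫ (ConcreteCategory.ofHom (C := ModuleCat K) (X := S.moduleCatLeftHomologyData.K) (Y := S.moduleCatLeftHomologyData.K) (tauZ S φ)) := by
  have hsub : ∀ y : S.cycles,
      (LinearMap.ker S.g.hom).subtype (S.moduleCatCyclesIso.hom y) = S.iCycles y :=
    fun y => congrArg (fun h => ModuleCat.Hom.hom h y) S.moduleCatCyclesIso_hom_i
  ext x
  apply Subtype.ext
  show (LinearMap.ker S.g.hom).subtype (S.moduleCatCyclesIso.hom (ShortComplex.cyclesMap φ x)) =
    φ.τ₂ ((LinearMap.ker S.g.hom).subtype (S.moduleCatCyclesIso.hom x))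
  have h2 : S.iCycles (ShortComplex.cyclesMap φ x) = φ.τ₂ (S.iCycles x) :=
    congrArg (fun h => ModuleCat.Hom.hom h x) (ShortComplex.cyclesMap_i φ)
  rw [hsub, h2, hsub]

lemma hom_square :
    ShortComplex.homologyMap φ ≫ S.moduleCatHomologyIso.hom =
      S.moduleCatHomologyIso.hom ≫ (ConcreteCategory.ofHom (C := ModuleCat K) (X := S.moduleCatLeftHomologyData.H) (Y := S.moduleCatLeftHomologyData.H) (tauH S φ)) := by
  rw [← cancel_epi S.homologyπ]
  have hπ : (ConcreteCategory.ofHom (C := ModuleCat K) (X := S.moduleCatLeftHomologyData.K) (Y := S.moduleCatLeftHomologyData.K) (tauZ S φ)) ≫ S.moduleCatLeftHomologyData.π =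
      S.moduleCatLeftHomologyData.π ≫ (ConcreteCategory.ofHom (C := ModuleCat K) (X := S.moduleCatLeftHomologyData.H) (Y := S.moduleCatLeftHomologyData.H) (tauH S φ)) := by
    ext x
    rfl
  calc S.homologyπ ≫ ShortComplex.homologyMap φ ≫ S.moduleCatHomologyIso.hom
      = (S.homologyπ ≫ ShortComplex.homologyMap φ) ≫ S.moduleCatHomologyIso.hom := by
        rw [Category.assoc]
    _ = (ShortComplex.cyclesMap φ ≫ S.homologyπ) ≫ S.moduleCatHomologyIso.hom := by
        rw [ShortComplex.homologyπ_naturality]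
    _ = ShortComplex.cyclesMap φ ≫ (S.homologyπ ≫ S.moduleCatHomologyIso.hom) := by
        rw [Category.assoc]
    _ = ShortComplex.cyclesMap φ ≫ S.moduleCatCyclesIso.hom ≫ S.moduleCatLeftHomologyData.π := by
        rw [S.π_moduleCatCyclesIso_hom]
    _ = (ShortComplex.cyclesMap φ ≫ S.moduleCatCyclesIso.hom) ≫ S.moduleCatLeftHomologyData.π := by
        rw [Category.assoc]
    _ = (S.moduleCatCyclesIso.hom ≫ (ConcreteCategory.ofHom (C := ModuleCat K) (X := S.moduleCatLeftHomologyData.K) (Y := S.moduleCatLeftHomologyData.K) (tauZ S φ))) ≫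
          S.moduleCatLeftHomologyData.π := by rw [cyc_square]
    _ = S.moduleCatCyclesIso.hom ≫ S.moduleCatLeftHomologyData.π ≫
          (ConcreteCategory.ofHom (C := ModuleCat K) (X := S.moduleCatLeftHomologyData.H) (Y := S.moduleCatLeftHomologyData.H) (tauH S φ)) := by
        rw [Category.assoc, hπ]
    _ = (S.moduleCatCyclesIso.hom ≫ S.moduleCatLeftHomologyData.π) ≫
          (ConcreteCategory.ofHom (C := ModuleCat K) (X := S.moduleCatLeftHomologyData.H) (Y := S.moduleCatLeftHomologyData.H) (tauH S φ)) := by rw [Category.assoc]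
    _ = (S.homologyπ ≫ S.moduleCatHomologyIso.hom) ≫
          (ConcreteCategory.ofHom (C := ModuleCat K) (X := S.moduleCatLeftHomologyData.H) (Y := S.moduleCatLeftHomologyData.H) (tauH S φ)) := by
        rw [S.π_moduleCatCyclesIso_hom]
    _ = S.homologyπ ≫ S.moduleCatHomologyIso.hom ≫
          (ConcreteCategory.ofHom (C := ModuleCat K) (X := S.moduleCatLeftHomologyData.H) (Y := S.moduleCatLeftHomologyData.H) (tauH S φ)) := by rw [Category.assoc]

lemma trace_homologyMap_sc :
    LinearMap.trace K S.homology (ShortComplex.homologyMap φ).hom =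
      LinearMap.trace K (LinearMap.ker S.g.hom ⧸ LinearMap.range S.moduleCatToCycles) (tauH S φ) :=
  trace_eq_of_iso S.moduleCatHomologyIso _ _ (hom_square S φ)

end SC


section Complex

variable (C : ChainComplex (ModuleCat K) ℕ) (T : C ⟶ C)

/-- The short complex `C (k+1) → C k → C (k-1)`. -/
noncomputable abbrev Sc (k : ℕ) : ShortComplex (ModuleCat K) := C.sc' (k+1) k (k-1)

/-- The endomorphism of `Sc C k` induced by `T`. -/
noncomputable abbrev phi (k : ℕ) : Sc C k ⟶ Sc C k :=
  (HomologicalComplex.shortComplexFunctor' (ModuleCat K) (ComplexShape.down ℕ)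
    (k+1) k (k-1)).map T

lemma next_eq (k : ℕ) : (ComplexShape.down ℕ).next k = k - 1 := by
  cases k with
  | zero => exact ChainComplex.next_nat_zero
  | succ m => exact ChainComplex.next_nat_succ m

lemma trace_homologyMap (k : ℕ) :
    LinearMap.trace K (C.homology k) (HomologicalComplex.homologyMap T k).hom =
      LinearMap.trace K ((LinearMap.ker (Sc C k).g.hom ⧸ LinearMap.range (Sc C k).moduleCatToCycles)) (tauH (Sc C k) (phi C T k)) := by
  rw [← trace_homologyMap_sc]
  exact trace_eq_of_iso
    ((HomologicalComplex.homologyFunctorIso' (ModuleCat K) (ComplexShape.down ℕ)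
        (k+1) k (k-1) (ChainComplex.prev ℕ k) (next_eq k)).app C)
    (HomologicalComplex.homologyMap T k) (ShortComplex.homologyMap (phi C T k))
    ((HomologicalComplex.homologyFunctorIso' (ModuleCat K) (ComplexShape.down ℕ)
        (k+1) k (k-1) (ChainComplex.prev ℕ k) (next_eq k)).hom.naturality T)

lemma gmem (k : ℕ) : ∀ x ∈ LinearMap.range ((Sc C k).g.hom),
    (phi C T k).τ₃.hom x ∈ LinearMap.range ((Sc C k).g.hom) := by
  rintro x ⟨y, rfl⟩
  refine ⟨(phi C T k).τ₂ y, ?_⟩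
  show (Sc C k).g ((phi C T k).τ₂ y) = (phi C T k).τ₃ ((Sc C k).g y)
  exact congrArg (fun h => ModuleCat.Hom.hom h y) (phi C T k).comm₂₃

/-- The trace of `T` on the boundary space `range (d : C k → C (k-1))`. -/
noncomputable def rTrace (k : ℕ) : K :=
  LinearMap.trace K (LinearMap.range ((Sc C k).g.hom))
    ((phi C T k).τ₃.hom.restrict (gmem C T k))

lemma rTrace_zero : rTrace C T 0 = 0 := by
  haveI : Subsingleton (LinearMap.range ((Sc C 0).g.hom)) := by
    constructor
    rintro ⟨a, x, rfl⟩ ⟨b, y, rfl⟩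
    apply Subtype.ext
    have hz : (Sc C 0).g = 0 := C.shape 0 (0-1) (by simp [ComplexShape.down_Rel])
    show (Sc C 0).g x = (Sc C 0).g y
    rw [hz]; rfl
  exact trace_subsingleton _

lemma rTrace_top (m : ℕ) [Subsingleton (C.X (m+1))] : rTrace C T (m+1) = 0 := by
  haveI : Subsingleton (LinearMap.range ((Sc C (m+1)).g.hom)) := by
    constructor
    rintro ⟨a, x, rfl⟩ ⟨b, y, rfl⟩
    apply Subtype.ext
    have hxy : x = y := Subsingleton.elim (α := C.X (m+1)) x y
    show (Sc C (m+1)).g x = (Sc C (m+1)).g y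
    rw [hxy]
  exact trace_subsingleton _

variable [∀ i : ℕ, FiniteDimensional K (C.X i)]

lemma key1 (k : ℕ) :
    LinearMap.trace K (C.X k) (T.f k).hom =
      LinearMap.trace K (LinearMap.ker ((Sc C k).g.hom)) (tauZ (Sc C k) (phi C T k)) +
        rTrace C T k := by
  haveI : FiniteDimensional K ((Sc C k).X₂) := inferInstanceAs (FiniteDimensional K (C.X k))
  have h := trace_split (phi C T k).τ₂.hom
    (LinearMap.ker ((Sc C k).g.hom)) (tau2_ker_mem (Sc C k) (phi C T k))
  have h2 : LinearMap.trace K ((Sc C k).X₂ ⧸ LinearMap.ker ((Sc C k).g.hom))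
      ((LinearMap.ker ((Sc C k).g.hom)).mapQ (LinearMap.ker ((Sc C k).g.hom))
        (phi C T k).τ₂.hom
        (fun x hx => tau2_ker_mem (Sc C k) (phi C T k) x hx)) = rTrace C T k := by
    refine trace_eq_of_comm (LinearMap.quotKerEquivRange
      (Sc C k).g.hom) _ _ (fun x => ?_)
    obtain ⟨m, rfl⟩ := Submodule.Quotient.mk_surjective _ x
    apply Subtype.ext
    rw [Submodule.mapQ_apply]
    show (Sc C k).g.hom ((phi C T k).τ₂ m) =
      (phi C T k).τ₃.hom
        ((Sc C k).g.hom m)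
    exact congrArg (fun h => ModuleCat.Hom.hom h m) (phi C T k).comm₂₃
  rw [← h2]
  exact h

lemma key2 (k : ℕ) :
    LinearMap.trace K (LinearMap.ker ((Sc C k).g.hom)) (tauZ (Sc C k) (phi C T k)) =
      LinearMap.trace K ((LinearMap.ker (Sc C k).g.hom ⧸ LinearMap.range (Sc C k).moduleCatToCycles)) (tauH (Sc C k) (phi C T k)) +
        rTrace C T (k+1) := by
  haveI : FiniteDimensional K ((Sc C k).X₂) := inferInstanceAs (FiniteDimensional K (C.X k))
  have h := trace_split (tauZ (Sc C k) (phi C T k))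
    (LinearMap.range ((Sc C k).moduleCatToCycles)) (tauZ_range_le (Sc C k) (phi C T k))
  have hle : LinearMap.range ((Sc C k).f.hom) ≤ LinearMap.ker ((Sc C k).g.hom) := by
    rintro x ⟨y, rfl⟩
    show (Sc C k).g ((Sc C k).f y) = 0
    exact congrArg (fun h => ModuleCat.Hom.hom h y) (Sc C k).zero
  have hEq : LinearMap.range ((Sc C k).moduleCatToCycles) =
      Submodule.comap (LinearMap.ker ((Sc C k).g.hom)).subtype (LinearMap.range ((Sc C k).f.hom)) := by
    ext x
    constructor
    · rintro ⟨y, rfl⟩; exact ⟨y, rfl⟩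
    · rintro ⟨y, hy⟩; exact ⟨y, Subtype.ext hy⟩
  have h6 : LinearMap.trace K (LinearMap.range ((Sc C k).moduleCatToCycles))
      ((tauZ (Sc C k) (phi C T k)).restrict (tauZ_range_le (Sc C k) (phi C T k))) =
      rTrace C T (k+1) := by
    refine trace_eq_of_comm
      ((LinearEquiv.ofEq _ _ hEq).trans (Submodule.comapSubtypeEquivOfLe hle)) _ _ (fun x => ?_)
    apply Subtype.ext
    rfl
  rw [h, h6, add_comm]
  rfl

end Complex

end HopfTraceAux

open HopfTraceAux

/-- Hopf trace formula (Lefschetz number of an automorphism): let `T` be an automorphism of a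
chain complex `0 → C_n → ⋯ → C_0 → 0` of finite-dimensional vector spaces over a field.
Then the alternating sum of the traces of `T` on the chain groups equals the alternating sum
of the traces of the induced maps on homology. -/
theorem hopf_trace_formula (K : Type) [Field K]
    (C : ChainComplex (ModuleCat K) ℕ) [∀ i : ℕ, FiniteDimensional K (C.X i)]
    (n : ℕ) (hbound : ∀ i : ℕ, n < i → Subsingleton (C.X i))
    (T : C ≅ C) :
    ∑ k ∈ Finset.range (n + 1), (-1 : ℤ) ^ k • LinearMap.trace K (C.X k) (T.hom.f k).hom =
      ∑ k ∈ Finset.range (n + 1),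
        (-1 : ℤ) ^ k • LinearMap.trace K (C.homology k)
          (HomologicalComplex.homologyMap T.hom k).hom := by
  have hdec : ∀ k : ℕ, LinearMap.trace K (C.X k) (T.hom.f k).hom =
      LinearMap.trace K (C.homology k) (HomologicalComplex.homologyMap T.hom k).hom +
        rTrace C T.hom (k+1) + rTrace C T.hom k := by
    intro k
    rw [key1 C T.hom k, key2 C T.hom k, ← trace_homologyMap C T.hom k]
  have hr0 : rTrace C T.hom 0 = 0 := rTrace_zero C T.hom
  have hrn : rTrace C T.hom (n+1) = 0 := by
    haveI : Subsingleton (C.X (n+1)) := hbound (n+1) (Nat.lt_succ_self n)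
    exact rTrace_top C T.hom n
  have hzero : (∑ k ∈ Finset.range (n+1), (-1:ℤ)^k • rTrace C T.hom (k+1)) +
      (∑ k ∈ Finset.range (n+1), (-1:ℤ)^k • rTrace C T.hom k) = 0 := by
    rw [Finset.sum_range_succ, Finset.sum_range_succ' (fun k => (-1:ℤ)^k • rTrace C T.hom k) n]
    rw [hrn, hr0, smul_zero, smul_zero, add_zero, add_zero]
    rw [← Finset.sum_add_distrib]
    apply Finset.sum_eq_zero
    intro i _
    have hp : ((-1:ℤ)^(i+1)) = -(-1:ℤ)^i := by ring
    rw [hp, neg_smul, add_neg_cancel]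
  calc ∑ k ∈ Finset.range (n + 1), (-1 : ℤ) ^ k • LinearMap.trace K (C.X k) (T.hom.f k).hom
      = ∑ k ∈ Finset.range (n + 1),
          ((-1 : ℤ) ^ k • LinearMap.trace K (C.homology k)
              (HomologicalComplex.homologyMap T.hom k).hom
            + ((-1 : ℤ) ^ k • rTrace C T.hom (k+1) + (-1 : ℤ) ^ k • rTrace C T.hom k)) := by
        refine Finset.sum_congr rfl (fun k _ => ?_)
        rw [hdec k, smul_add, smul_add, add_assoc]
    _ = (∑ k ∈ Finset.range (n + 1), (-1 : ℤ) ^ k • LinearMap.trace K (C.homology k)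
            (HomologicalComplex.homologyMap T.hom k).hom)
          + ((∑ k ∈ Finset.range (n+1), (-1:ℤ)^k • rTrace C T.hom (k+1)) +
              (∑ k ∈ Finset.range (n+1), (-1:ℤ)^k • rTrace C T.hom k)) := by
        rw [Finset.sum_add_distrib, Finset.sum_add_distrib]
    _ = ∑ k ∈ Finset.range (n + 1), (-1 : ℤ) ^ k • LinearMap.trace K (C.homology k)
            (HomologicalComplex.homologyMap T.hom k).hom := by
        rw [hzero, add_zero]
end
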